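/- Let $G$ be a group with internal semidirect decomposition $G = G_2 \ltimes G_1$ ($G_1 \trianglelefteq G$, $G_2 \leq G$, $G_1 \cap G_2 = \{1\}$, $G_1G_2 = G$). Let $H \leq G_2$ and let $L \leq G$ be a subgroup with $H \trianglelefteq L$ (i.e., $L$ normalizes $H$). Then every $x \in L$, written (uniquely) as $x = ab$ with $a \in G_1$ and $b \in G_2$, satisfies $a \in C_{G_1}(H)$ and $b \in N_{G_2}(H)$. -/

import Mathlib

theorem stmt_13 {G : Type*} [Group G] (G1 G2 : Subgroup G) [G1.Normal]
    (hdisj : G1 ⊓ G2 = ⊥) (hprod : ∀ x : G, ∃ a ∈ G1, ∃ b ∈ G2, x = a * b)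
    (H : Subgroup G) (hH : H ≤ G2)
    (L : Subgroup G) (hLn : L ≤ Subgroup.normalizer (H : Set G)) :
    ∀ x ∈ L, ∀ a b : G, a ∈ G1 → b ∈ G2 → x = a * b →
      (∀ h ∈ H, a * h = h * a) ∧ b ∈ Subgroup.normalizer (H : Set G) := by
  intro x hx a b ha hb hxab
  have hxn : x ∈ Subgroup.normalizer (H : Set G) := hLn hx
  have hxn' : x⁻¹ ∈ Subgroup.normalizer (H : Set G) := (Subgroup.normalizer (H : Set G)).inv_mem hxn
  have key : ∀ h ∈ H, a * h = h * a := by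
    intro h hh
    have hh' : x⁻¹ * h * x ∈ H := by
      have := (Subgroup.mem_normalizer_iff.mp hxn' h).mp hh
      simpa using this
    have hc2 : a⁻¹ * h * a ∈ G2 := by
      have heq : a⁻¹ * h * a = b * (x⁻¹ * h * x) * b⁻¹ := by
        subst hxab; group
      rw [heq]
      exact mul_mem (mul_mem hb (hH hh')) (inv_mem hb)
    have hcmem : a⁻¹ * h * a * h⁻¹ ∈ G1 ⊓ G2 := by
      rw [Subgroup.mem_inf]
      constructor
      · have h1 : a⁻¹ * (h * a * h⁻¹) ∈ G1 :=
          mul_mem (inv_mem ha) (Subgroup.Normal.conj_mem ‹G1.Normal› a ha h)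
        simpa [mul_assoc] using h1
      · exact mul_mem hc2 (inv_mem (hH hh))
    rw [hdisj] at hcmem
    have hone : a⁻¹ * h * a * h⁻¹ = 1 := hcmem
    have h1 : a⁻¹ * h * a = h := mul_inv_eq_one.mp hone
    have h2 : a * (a⁻¹ * h * a) = a * h := by rw [h1]
    have h3 : h * a = a * h := by simpa [mul_assoc] using h2
    exact h3.symm
  refine ⟨key, Subgroup.mem_normalizer_iff.mpr ?_⟩
  intro g
  constructor
  · intro hg
    have hxg : x * g * x⁻¹ ∈ H := (Subgroup.mem_normalizer_iff.mp hxn g).mp hg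
    have heq : b * g * b⁻¹ = a⁻¹ * (x * g * x⁻¹) * a := by subst hxab; group
    have hcomm := key _ hxg
    have heq2 : a⁻¹ * (x * g * x⁻¹) * a = x * g * x⁻¹ := by
      rw [mul_assoc, ← hcomm]; group
    rw [heq, heq2]
    exact hxg
  · intro hg
    have hxk : x⁻¹ * (b * g * b⁻¹) * x ∈ H := by
      have := (Subgroup.mem_normalizer_iff.mp hxn' (b * g * b⁻¹)).mp hg
      simpa using this
    have hk := key _ hg
    have ha' : a * (b * g * b⁻¹) * a⁻¹ = b * g * b⁻¹ := by rw [hk]; group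
    have heq : g = x⁻¹ * (a * (b * g * b⁻¹) * a⁻¹) * x := by subst hxab; group
    rw [ha'] at heq
    rw [heq]
    exact hxk
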